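/- Under the same reflected Kaczmarz iteration (α = 2, cyclic row order) applied to a consistent system A x = b, let x_* be the solution minimizing ‖x₀ - x_*‖ over all solutions. Then for every solution x of A x = b and every k, the inner product ⟨x_{k+1} - x_*, x - x_*⟩ = ⟨x_k - x_*, x - x_*⟩. In particular, since ⟨x₀ - x_*, x - x_*⟩ = 0 for all solutions x, one has ⟨x_k - x_*, x - x_*⟩ = 0 for all k, so x_* is the nearest solution to every iterate x_k. -/

import Mathlib

open Matrix

/-- Reinterpret a plain vector as an element of Euclidean space. -/
def toE {n : ℕ} (v : Fin n → ℝ) : EuclideanSpace ℝ (Fin n) := WithLp.toLp 2 v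

lemma min_orth {n : ℕ} (u v : EuclideanSpace ℝ (Fin n))
    (h : ∀ t : ℝ, ‖u‖ ≤ ‖u - t • v‖) : (inner ℝ u v : ℝ) = 0 := by
  by_cases hv : v = 0
  · simp [hv]
  · have hv' : (0:ℝ) < ‖v‖ := norm_pos_iff.mpr hv
    have hvn : (0:ℝ) < ‖v‖^2 := by positivity
    set c : ℝ := inner ℝ u v with hc
    set t := c / ‖v‖^2 with ht
    have h1 := h t
    have h2 : ‖u‖^2 ≤ ‖u - t • v‖^2 := by
      nlinarith [norm_nonneg u, norm_nonneg (u - t • v)]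
    rw [norm_sub_sq_real, real_inner_smul_right, norm_smul] at h2
    have habs : ‖t‖^2 = t^2 := sq_abs t
    have ht2 : t * c = c^2 / ‖v‖^2 := by rw [ht]; ring
    have ht3 : t^2 * ‖v‖^2 = c^2 / ‖v‖^2 := by rw [ht]; field_simp
    rw [mul_pow, habs, ht3, ← hc] at h2
    have hq : c^2 / ‖v‖^2 ≤ 0 := by nlinarith [h2, ht2]
    have : c^2 ≤ 0 := by
      have := mul_nonpos_of_nonpos_of_nonneg hq (le_of_lt hvn)
      rw [div_mul_cancel₀ _ (ne_of_gt hvn)] at this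
      exact this
    nlinarith [sq_nonneg c]

/-- for the reflected Kaczmarz iteration applied to a consistent
system, with `x_*` the solution nearest to `x₀`, the inner product
`⟨x_k - x_*, x - x_*⟩` is invariant in `k` for every solution `x`; in
particular it is always `0`, so `x_*` is the nearest solution to every iterate. -/
theorem kaczmarz_reflection_orth (m n : ℕ) (hm : 0 < m)
    (A : Matrix (Fin m) (Fin n) ℝ) (b : Fin m → ℝ)
    (hA : ∀ i, A i ≠ 0)
    (xs : ℕ → EuclideanSpace ℝ (Fin n))
    (hiter : ∀ k : ℕ,
      xs (k + 1) = xs k +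
        (2 * (b ⟨k % m, Nat.mod_lt k hm⟩ -
            ∑ j, A ⟨k % m, Nat.mod_lt k hm⟩ j * xs k j) /
          (∑ j, A ⟨k % m, Nat.mod_lt k hm⟩ j ^ 2)) • toE (A ⟨k % m, Nat.mod_lt k hm⟩))
    (xstar : EuclideanSpace ℝ (Fin n)) (hstar : A.mulVec xstar = b)
    (hmin : ∀ x : EuclideanSpace ℝ (Fin n), A.mulVec x = b →
      ‖xs 0 - xstar‖ ≤ ‖xs 0 - x‖) :
    (∀ x : EuclideanSpace ℝ (Fin n), A.mulVec x = b → ∀ k,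
      (inner ℝ (xs (k + 1) - xstar) (x - xstar) : ℝ) =
        inner ℝ (xs k - xstar) (x - xstar)) ∧
    (∀ x : EuclideanSpace ℝ (Fin n), A.mulVec x = b → ∀ k,
      (inner ℝ (xs k - xstar) (x - xstar) : ℝ) = 0) := by
  -- row orthogonality
  have hrow : ∀ (x : EuclideanSpace ℝ (Fin n)), A.mulVec x = b → ∀ i : Fin m,
      (inner ℝ (toE (A i)) (x - xstar) : ℝ) = 0 := by
    intro x hx i
    have hx' : ∑ j, A i j * x j = b i := by
      rw [← hx]; rfl
    have hs' : ∑ j, A i j * xstar j = b i := by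
      rw [← hstar]; rfl
    simp only [PiLp.inner_apply, RCLike.inner_apply, conj_trivial, toE, PiLp.toLp_apply]
    have : ∀ j, (x - xstar) j = x j - xstar j := fun j => rfl
    simp only [this, sub_mul, mul_comm _ (A i _), mul_sub, Finset.sum_sub_distrib, hx', hs', sub_self]
  have hinv : ∀ x : EuclideanSpace ℝ (Fin n), A.mulVec x = b → ∀ k,
      (inner ℝ (xs (k + 1) - xstar) (x - xstar) : ℝ) =
        inner ℝ (xs k - xstar) (x - xstar) := by
    intro x hx k
    rw [hiter k]
    rw [add_sub_right_comm, inner_add_left, real_inner_smul_left, hrow x hx]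
    ring
  refine ⟨hinv, fun x hx k => ?_⟩
  induction k with
  | zero =>
    apply min_orth
    intro t
    have hy : A.mulVec ((xstar + t • (x - xstar) : EuclideanSpace ℝ (Fin n))) = b := by
      rw [WithLp.ofLp_add, WithLp.ofLp_smul, WithLp.ofLp_sub, mulVec_add, mulVec_smul, mulVec_sub, hx, hstar]
      simp
    have := hmin _ hy
    have heq : xs 0 - (xstar + t • (x - xstar)) = (xs 0 - xstar) - t • (x - xstar) := by
      abel
    rwa [heq] at this
  | succ k ih => rw [hinv x hx k, ih]
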